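/- Let γ_1, …, γ_n be a family of gamma matrices for signature (s,t) and let ⟨·,·⟩ be the spin-invariant inner product. Then for every matrix b in the real linear span of the products {γ_i γ_j : i ≠ j} (the spin Lie algebra) and all ψ1, ψ2 ∈ ℂ^N: (i) ⟨b ψ1, ψ2⟩ + ⟨ψ1, b ψ2⟩ = 0; (ii) ⟨exp(b) ψ1, exp(b) ψ2⟩ = ⟨ψ1, ψ2⟩, where exp is the matrix exponential. -/

import Mathlib

open Matrix

/-- A family of gamma matrices for signature `(s, t)`. -/
def IsGammaFamily (s t : ℕ)
    (γ : Fin (s + t) → Matrix (Fin (2 ^ ((s + t) / 2))) (Fin (2 ^ ((s + t) / 2))) ℂ) : Prop :=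
  (∀ j k : Fin (s + t),
      γ j * γ k + γ k * γ j
        = (if j = k then (if (j : ℕ) < t then (2 : ℂ) else -2) else 0) • (1 : Matrix _ _ ℂ)) ∧
  (∀ k : Fin (s + t), (γ k)ᴴ = if (k : ℕ) < t then γ k else -(γ k))

/-- The spin-invariant inner product. -/
noncomputable def spinInner (s t : ℕ)
    (γ : Fin (s + t) → Matrix (Fin (2 ^ ((s + t) / 2))) (Fin (2 ^ ((s + t) / 2))) ℂ)
    (ψ₁ ψ₂ : Fin (2 ^ ((s + t) / 2)) → ℂ) : ℂ :=
  if t = 0 then star ψ₁ ⬝ᵥ ψ₂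
  else Complex.I ^ (t / 2) *
    (star ψ₁ ⬝ᵥ (List.ofFn fun i : Fin t => γ (Fin.castLE (Nat.le_add_left t s) i)).prod *ᵥ ψ₂)

section Aux

variable {s t : ℕ} {γ : Fin (s + t) → Matrix (Fin (2 ^ ((s + t) / 2))) (Fin (2 ^ ((s + t) / 2))) ℂ}

lemma gamma_anticomm (hγ : IsGammaFamily s t γ) {i j : Fin (s + t)} (h : i ≠ j) :
    γ i * γ j = -(γ j * γ i) := by
  have h2 := hγ.1 i j
  rw [if_neg h, zero_smul] at h2
  exact eq_neg_of_add_eq_zero_left h2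

lemma gamma_sq (hγ : IsGammaFamily s t γ) (k : Fin (s + t)) :
    γ k * γ k = (if (k : ℕ) < t then (1 : ℂ) else -1) • 1 := by
  have h := hγ.1 k k
  rw [if_pos rfl] at h
  have h2 : (2 : ℂ) • (γ k * γ k)
      = (2 : ℂ) • ((if (k : ℕ) < t then (1 : ℂ) else -1) • (1 : Matrix _ _ ℂ)) := by
    rw [two_smul, h, smul_smul]; split_ifs <;> norm_num
  exact smul_right_injective _ two_ne_zero h2

lemma gamma_herm (hγ : IsGammaFamily s t γ) (k : Fin (s + t)) :
    (γ k)ᴴ = (if (k : ℕ) < t then (1 : ℂ) else -1) • γ k := by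
  rw [hγ.2 k]; split_ifs <;> simp

lemma gamma_isUnit (hγ : IsGammaFamily s t γ) (k : Fin (s + t)) : IsUnit (γ k) := by
  set c : ℂ := if (k : ℕ) < t then (1 : ℂ) else -1 with hc
  have hcc : c * c = 1 := by rw [hc]; split_ifs <;> norm_num
  have h1 : γ k * (c • γ k) = 1 := by
    rw [mul_smul_comm, gamma_sq hγ k, smul_smul, hcc, one_smul]
  have h2 : (c • γ k) * γ k = 1 := by
    rw [smul_mul_assoc, gamma_sq hγ k, smul_smul, hcc, one_smul]
  exact ⟨⟨γ k, c • γ k, h1, h2⟩, rfl⟩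

lemma gamma_comm_prod (hγ : IsGammaFamily s t γ) :
    ∀ (m : ℕ) (hm : m ≤ s + t) (k : Fin (s + t)),
      γ k * (List.ofFn fun i : Fin m => γ (Fin.castLE hm i)).prod
        = (if (k : ℕ) < m then ((-1 : ℂ)) ^ (m - 1) else (-1 : ℂ) ^ m) •
          ((List.ofFn fun i : Fin m => γ (Fin.castLE hm i)).prod * γ k) := by
  intro m
  induction m with
  | zero => intro hm k; simp
  | succ m ih =>
    intro hm k
    have hm' : m ≤ s + t := Nat.le_of_succ_le hm
    have hofn : (List.ofFn fun i : Fin (m + 1) => γ (Fin.castLE hm i))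
        = (List.ofFn fun i : Fin m => γ (Fin.castLE hm' i)).concat
            (γ (Fin.castLE hm (Fin.last m))) := by
      rw [List.ofFn_succ']; rfl
    set P := (List.ofFn fun i : Fin m => γ (Fin.castLE hm' i)).prod with hP
    set g : Fin (s + t) := Fin.castLE hm (Fin.last m) with hg
    have hgv : (g : ℕ) = m := rfl
    rw [hofn, List.prod_concat]
    simp only [Nat.add_sub_cancel]
    have ihk := ih hm' k
    by_cases hk : (k : ℕ) = m
    · have hkg : k = g := Fin.ext (by rw [hgv, hk])
      have hklt : ¬ (k : ℕ) < m := by omega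
      rw [if_neg hklt] at ihk
      rw [if_pos (by omega), ← hkg, ← mul_assoc, ihk, smul_mul_assoc]
    · have hkg : k ≠ g := fun h => hk (by rw [h, hgv])
      have hanti := gamma_anticomm hγ hkg
      calc γ k * (P * γ g) = (γ k * P) * γ g := by rw [mul_assoc]
        _ = ((if (k : ℕ) < m then ((-1 : ℂ)) ^ (m - 1) else (-1 : ℂ) ^ m) • (P * γ k)) * γ g := by
              rw [ihk]
        _ = (if (k : ℕ) < m then ((-1 : ℂ)) ^ (m - 1) else (-1 : ℂ) ^ m) • (P * (γ k * γ g)) := by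
              rw [smul_mul_assoc, mul_assoc]
        _ = (-(if (k : ℕ) < m then ((-1 : ℂ)) ^ (m - 1) else (-1 : ℂ) ^ m)) •
              (P * γ g * γ k) := by
              rw [hanti, mul_neg, smul_neg, neg_smul, mul_assoc]
        _ = _ := by
              by_cases hlt : (k : ℕ) < m
              · rw [if_pos hlt, if_pos (by omega)]
                congr 1
                have hm1 : (-1 : ℂ) ^ m = (-1) ^ (m - 1) * (-1) := by
                  conv_lhs => rw [show m = m - 1 + 1 by omega]
                  rw [pow_succ]
                rw [hm1]; ring
              · rw [if_neg hlt, if_neg (by omega)]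
                congr 1
                rw [pow_succ]; ring

lemma prod_isUnit (hγ : IsGammaFamily s t γ) (m : ℕ) (hm : m ≤ s + t) :
    IsUnit ((List.ofFn fun i : Fin m => γ (Fin.castLE hm i)).prod) := by
  induction m with
  | zero => simp
  | succ m ih =>
    have hm' : m ≤ s + t := Nat.le_of_succ_le hm
    have hofn : (List.ofFn fun i : Fin (m + 1) => γ (Fin.castLE hm i))
        = (List.ofFn fun i : Fin m => γ (Fin.castLE hm' i)).concat
            (γ (Fin.castLE hm (Fin.last m))) := by
      rw [List.ofFn_succ']; rfl
    rw [hofn, List.prod_concat]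
    exact (ih hm').mul (gamma_isUnit hγ _)

lemma sign_cancel (hγ : IsGammaFamily s t γ) (i j : Fin (s + t)) :
    ((if (j : ℕ) < t then (1 : ℂ) else -1) * (if (i : ℕ) < t then (1 : ℂ) else -1)) *
      ((if (i : ℕ) < t then (-1 : ℂ) ^ (t - 1) else (-1 : ℂ) ^ t) *
        (if (j : ℕ) < t then (-1 : ℂ) ^ (t - 1) else (-1 : ℂ) ^ t)) = 1 := by
  have sq : ∀ r : ℕ, ((-1 : ℂ)) ^ r * (-1 : ℂ) ^ r = 1 := fun r => by
    rw [← pow_add]; exact Even.neg_one_pow ⟨r, rfl⟩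
  by_cases hi : (i : ℕ) < t <;> by_cases hj : (j : ℕ) < t <;>
    simp only [if_pos, if_neg, hi, hj, if_true, if_false]
  · rw [one_mul, one_mul]; exact sq _
  · have ht : (-1 : ℂ) ^ t = (-1) ^ (t - 1) * (-1) := by
      conv_lhs => rw [show t = t - 1 + 1 by omega]
      rw [pow_succ]
    rw [ht]
    linear_combination sq (t - 1)
  · have ht : (-1 : ℂ) ^ t = (-1) ^ (t - 1) * (-1) := by
      conv_lhs => rw [show t = t - 1 + 1 by omega]
      rw [pow_succ]
    rw [ht]
    linear_combination sq (t - 1)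
  · rw [neg_mul_neg, one_mul, one_mul]; exact sq _

lemma key_antiselfadjoint (hγ : IsGammaFamily s t γ)
    (b : Matrix (Fin (2 ^ ((s + t) / 2))) (Fin (2 ^ ((s + t) / 2))) ℂ)
    (hb : b ∈ Submodule.span ℝ
      {M : Matrix (Fin (2 ^ ((s + t) / 2))) (Fin (2 ^ ((s + t) / 2))) ℂ |
        ∃ i j : Fin (s + t), i ≠ j ∧ M = γ i * γ j}) :
    bᴴ * (List.ofFn fun i : Fin t => γ (Fin.castLE (Nat.le_add_left t s) i)).prod
      + (List.ofFn fun i : Fin t => γ (Fin.castLE (Nat.le_add_left t s) i)).prod * b = 0 := by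
  set A := (List.ofFn fun i : Fin t => γ (Fin.castLE (Nat.le_add_left t s) i)).prod with hA
  refine Submodule.span_induction ?_ ?_ ?_ ?_ hb
  · rintro M ⟨i, j, hij, rfl⟩
    set εi : ℂ := if (i : ℕ) < t then (1 : ℂ) else -1 with hεi
    set εj : ℂ := if (j : ℕ) < t then (1 : ℂ) else -1 with hεj
    set δi : ℂ := if (i : ℕ) < t then (-1 : ℂ) ^ (t - 1) else (-1 : ℂ) ^ t with hδi
    set δj : ℂ := if (j : ℕ) < t then (-1 : ℂ) ^ (t - 1) else (-1 : ℂ) ^ t with hδj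
    have hcomm : ∀ k : Fin (s + t), γ k * A
        = (if (k : ℕ) < t then (-1 : ℂ) ^ (t - 1) else (-1 : ℂ) ^ t) • (A * γ k) :=
      fun k => gamma_comm_prod hγ t (Nat.le_add_left t s) k
    have h2 : γ j * (γ i * A) = (δi * δj) • (A * (γ j * γ i)) := by
      rw [hcomm i, mul_smul_comm, ← mul_assoc, hcomm j, smul_mul_assoc, smul_smul, mul_assoc]
    have h3 : (γ i * γ j)ᴴ * A = ((εj * εi) * (δi * δj)) • (A * (γ j * γ i)) := by
      rw [conjTranspose_mul, gamma_herm hγ i, gamma_herm hγ j, smul_mul_assoc,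
        mul_smul_comm, smul_smul, smul_mul_assoc, mul_assoc, h2, smul_smul]
    have h4 : (γ i * γ j)ᴴ * A = -(A * (γ i * γ j)) := by
      rw [h3, gamma_anticomm hγ (Ne.symm hij), mul_neg, smul_neg,
        sign_cancel hγ i j, one_smul]
    rw [h4, neg_add_cancel]
  · simp
  · intro x y _ _ hx hy
    rw [conjTranspose_add, add_mul, mul_add]
    calc xᴴ * A + yᴴ * A + (A * x + A * y)
        = (xᴴ * A + A * x) + (yᴴ * A + A * y) := by abel
      _ = 0 := by rw [hx, hy, add_zero]
  · intro r x _ hx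
    rw [conjTranspose_smul, star_trivial, smul_mul_assoc, mul_smul_comm, ← smul_add, hx,
      smul_zero]

lemma spinInner_eq (γ : Fin (s + t) → Matrix (Fin (2 ^ ((s + t) / 2))) (Fin (2 ^ ((s + t) / 2))) ℂ)
    (ψ₁ ψ₂ : Fin (2 ^ ((s + t) / 2)) → ℂ) :
    spinInner s t γ ψ₁ ψ₂ = Complex.I ^ (t / 2) *
      (star ψ₁ ⬝ᵥ (List.ofFn fun i : Fin t => γ (Fin.castLE (Nat.le_add_left t s) i)).prod *ᵥ ψ₂) := by
  unfold spinInner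
  split_ifs with h
  · subst h; simp [Matrix.one_mulVec]
  · rfl

end Aux

/-- for every `b` in the real linear span of the products `γᵢ γⱼ` (`i ≠ j`),
i.e. the spin Lie algebra, Clifford multiplication by `b` is anti-self-adjoint for the
spin-invariant inner product, and the matrix exponential `exp b` preserves that product. -/
theorem spin_algebra_antiselfadjoint_and_exp_invariance (s t : ℕ) (hn : 1 ≤ s + t)
    (γ : Fin (s + t) → Matrix (Fin (2 ^ ((s + t) / 2))) (Fin (2 ^ ((s + t) / 2))) ℂ)
    (hγ : IsGammaFamily s t γ)
    (b : Matrix (Fin (2 ^ ((s + t) / 2))) (Fin (2 ^ ((s + t) / 2))) ℂ)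
    (hb : b ∈ Submodule.span ℝ
      {M : Matrix (Fin (2 ^ ((s + t) / 2))) (Fin (2 ^ ((s + t) / 2))) ℂ |
        ∃ i j : Fin (s + t), i ≠ j ∧ M = γ i * γ j}) :
    (∀ ψ₁ ψ₂ : Fin (2 ^ ((s + t) / 2)) → ℂ,
      spinInner s t γ (b *ᵥ ψ₁) ψ₂ + spinInner s t γ ψ₁ (b *ᵥ ψ₂) = 0) ∧
    (∀ ψ₁ ψ₂ : Fin (2 ^ ((s + t) / 2)) → ℂ,
      spinInner s t γ ((NormedSpace.exp b) *ᵥ ψ₁) ((NormedSpace.exp b) *ᵥ ψ₂)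
        = spinInner s t γ ψ₁ ψ₂) := by
  set A := (List.ofFn fun i : Fin t => γ (Fin.castLE (Nat.le_add_left t s) i)).prod with hA
  have hkey := key_antiselfadjoint hγ b hb
  have hstar : bᴴ * A = -(A * b) := eq_neg_of_add_eq_zero_left hkey
  constructor
  · intro ψ₁ ψ₂
    rw [spinInner_eq, spinInner_eq, ← hA]
    rw [Matrix.star_mulVec, Matrix.mulVec_mulVec]
    rw [Matrix.dotProduct_mulVec (star ψ₁ ᵥ* bᴴ), Matrix.vecMul_vecMul,
      Matrix.dotProduct_mulVec (star ψ₁)]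
    rw [← mul_add, ← add_dotProduct, ← Matrix.vecMul_add, hkey, Matrix.vecMul_zero,
      zero_dotProduct, mul_zero]
  · intro ψ₁ ψ₂
    obtain ⟨u, hu⟩ := prod_isUnit hγ t (Nat.le_add_left t s)
    rw [← hA] at hu
    have h2 : bᴴ * (u : Matrix _ _ ℂ) = (u : Matrix _ _ ℂ) * (-b) := by
      rw [hu, hstar, mul_neg]
    have hconj : bᴴ = (u : Matrix _ _ ℂ) * (-b) * (↑u⁻¹ : Matrix _ _ ℂ) := by
      calc bᴴ = bᴴ * (u : Matrix _ _ ℂ) * (↑u⁻¹ : Matrix _ _ ℂ) :=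
            (Units.mul_inv_cancel_right _ _).symm
        _ = _ := by rw [h2]
    have hexp : (NormedSpace.exp b)ᴴ
        = (u : Matrix _ _ ℂ) * NormedSpace.exp (-b) * (↑u⁻¹ : Matrix _ _ ℂ) := by
      rw [← Matrix.exp_conjTranspose, hconj, Matrix.exp_units_conj]
    have hmat : (NormedSpace.exp b)ᴴ * (A * NormedSpace.exp b) = A := by
      rw [hexp, ← hu]
      have h3 : (↑u⁻¹ : Matrix _ _ ℂ) * ((u : Matrix _ _ ℂ) * NormedSpace.exp b)
          = NormedSpace.exp b := by
        rw [← mul_assoc, Units.inv_mul, one_mul]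
      calc (u : Matrix _ _ ℂ) * NormedSpace.exp (-b) * (↑u⁻¹ : Matrix _ _ ℂ) *
            ((u : Matrix _ _ ℂ) * NormedSpace.exp b)
          = (u : Matrix _ _ ℂ) * (NormedSpace.exp (-b) * NormedSpace.exp b) := by
            rw [mul_assoc, h3, mul_assoc]
        _ = (u : Matrix _ _ ℂ) := by
            rw [← Matrix.exp_add_of_commute (-b) b (Commute.refl b).neg_left,
              neg_add_cancel, NormedSpace.exp_zero, mul_one]
    rw [spinInner_eq, spinInner_eq, ← hA]
    rw [Matrix.star_mulVec, Matrix.mulVec_mulVec]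
    rw [Matrix.dotProduct_mulVec (star ψ₁ ᵥ* (NormedSpace.exp b)ᴴ), Matrix.vecMul_vecMul,
      hmat, ← Matrix.dotProduct_mulVec]
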